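/- For 0 ≤ a < b ≤ c < d: θ ∫_0^a φ(a - x; e^{-(b-a)} · φ(c-b; e^{-(d-c)})) dx = θ log((e^d - e^c + e^b)/(e^d - e^c + e^b - e^a + 1)), where φ(t;s) = e^{-t}s/(1-(1-e^{-t})s). -/

import Mathlib

open Real intervalIntegral

/-- Mean number of families initiated in `(0,a)` unobservable in both `(a,b)` and `(c,d)`:
`θ ∫_0^a φ(a-x; e^{-(b-a)} φ(c-b; e^{-(d-c)})) dx
   = θ log((e^d-e^c+e^b)/(e^d-e^c+e^b-e^a+1))`. -/
theorem mean_unobservable_two (θ a b c d : ℝ) (hθ : 0 < θ) (ha : 0 ≤ a) (hab : a < b)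
    (hbc : b ≤ c) (hcd : c < d) :
    θ * ∫ x in (0:ℝ)..a,
        Real.exp (-(a - x)) *
            (Real.exp (-(b - a)) *
              (Real.exp (-(c - b)) * Real.exp (-(d - c)) /
                (1 - (1 - Real.exp (-(c - b))) * Real.exp (-(d - c))))) /
          (1 - (1 - Real.exp (-(a - x))) *
            (Real.exp (-(b - a)) *
              (Real.exp (-(c - b)) * Real.exp (-(d - c)) /
                (1 - (1 - Real.exp (-(c - b))) * Real.exp (-(d - c)))))) =
      θ * Real.log ((Real.exp d - Real.exp c + Real.exp b) /
        (Real.exp d - Real.exp c + Real.exp b - Real.exp a + 1)) := by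
  have hcd' : Real.exp c < Real.exp d := Real.exp_lt_exp.mpr hcd
  have hab' : Real.exp a < Real.exp b := Real.exp_lt_exp.mpr hab
  set E : ℝ := Real.exp d - Real.exp c + Real.exp b with hEdef
  have hE : 0 < E := by have := Real.exp_pos b; simp only [hEdef]; linarith
  have haE : Real.exp a < E := by simp only [hEdef]; linarith
  set V : ℝ := Real.exp (-(b - a)) *
              (Real.exp (-(c - b)) * Real.exp (-(d - c)) /
                (1 - (1 - Real.exp (-(c - b))) * Real.exp (-(d - c)))) with hVdef
  have hV : V = Real.exp a / E := by
    rw [hVdef, show -(b-a) = a - b by ring, show -(c-b) = b - c by ring,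
      show -(d-c) = c - d by ring, Real.exp_sub, Real.exp_sub, Real.exp_sub, hEdef]
    have hb := (Real.exp_pos b).ne'
    have hc := (Real.exp_pos c).ne'
    have hd := (Real.exp_pos d).ne'
    have hden : 1 - (1 - Real.exp b / Real.exp c) * (Real.exp c / Real.exp d)
        = (Real.exp d - Real.exp c + Real.exp b) / Real.exp d := by
      field_simp
      ring
    rw [hden]
    have hE' : Real.exp d - Real.exp c + Real.exp b ≠ 0 := by linarith
    field_simp
  have hV0 : 0 < V := by rw [hV]; positivity
  have hV1 : V < 1 := by rw [hV, div_lt_one hE]; exact haE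
  have key : ∀ x : ℝ, HasDerivAt (fun y => Real.log (1 - V + V * Real.exp (y - a)))
      (Real.exp (-(a - x)) * V / (1 - (1 - Real.exp (-(a - x))) * V)) x := by
    intro x
    have hex : 0 < Real.exp (x - a) := Real.exp_pos _
    have hpos : 0 < 1 - V + V * Real.exp (x - a) := by nlinarith
    have h1 : HasDerivAt (fun y : ℝ => 1 - V + V * Real.exp (y - a))
        (V * Real.exp (x - a)) x := by
      have h2 : HasDerivAt (fun y : ℝ => Real.exp (y - a)) (Real.exp (x - a)) x := by
        simpa [Function.comp_def] using (Real.hasDerivAt_exp (x - a)).comp x ((hasDerivAt_id x).sub_const a)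
      simpa using ((h2.const_mul V).const_add (1 - V))
    have h3 := h1.log hpos.ne'
    convert h3 using 1
    rw [show -(a - x) = x - a by ring]
    have hden2 : 1 - (1 - Real.exp (x - a)) * V = 1 - V + V * Real.exp (x - a) := by ring
    rw [hden2]
    field_simp
  have hcont : Continuous (fun x : ℝ =>
      Real.exp (-(a - x)) * V / (1 - (1 - Real.exp (-(a - x))) * V)) := by
    apply Continuous.div
    · fun_prop
    · fun_prop
    · intro x
      have hex : 0 < Real.exp (-(a - x)) := Real.exp_pos _
      nlinarith
  have hint : (∫ x in (0:ℝ)..a,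
        Real.exp (-(a - x)) * V / (1 - (1 - Real.exp (-(a - x))) * V))
      = Real.log (1 - V + V * Real.exp (a - a)) - Real.log (1 - V + V * Real.exp (0 - a)) := by
    exact intervalIntegral.integral_eq_sub_of_hasDerivAt
      (f := fun y => Real.log (1 - V + V * Real.exp (y - a)))
      (fun x _ => key x) (hcont.intervalIntegrable 0 a)
  rw [hint]
  have hval0 : 1 - V + V * Real.exp (0 - a) = (E - Real.exp a + 1) / E := by
    rw [hV, show (0:ℝ) - a = -a by ring, Real.exp_neg]
    have hea := (Real.exp_pos a).ne'
    field_simp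
  have hvala : 1 - V + V * Real.exp (a - a) = 1 := by simp [sub_self]
  rw [hvala, hval0, Real.log_one, Real.log_div (by linarith) hE.ne']
  have : Real.log (E / (E - Real.exp a + 1))
      = Real.log E - Real.log (E - Real.exp a + 1) := by
    rw [Real.log_div hE.ne' (by linarith)]
  rw [this]
  ring
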